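/- Suppose u : 2^[n] → ℝ≥0 is a normalized, monotone set function and c : 2^[n] → ℝ≥0 is a normalized, monotone, subadditive set function. Then any permutation of [n] that lists the elements i ∈ [n] in non-decreasing order of c({i}) has objective value at most n times the minimum objective value over all permutations of [n]. -/

import Mathlib

open Finset

/-- The set of the first `k` elements of the list `L`. -/
def prefSet {n : ℕ} (L : List (Fin n)) (k : ℕ) : Finset (Fin n) := (L.take k).toFinset

/-- Marginal value `f(e|S) = f(S ∪ {e}) - f S`. -/
noncomputable def marg {n : ℕ} (f : Finset (Fin n) → ℝ) (e : Fin n) (S : Finset (Fin n)) : ℝ :=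
  f (insert e S) - f S

/-- `L` is a listing of all elements of `[n]` (a permutation of `[n]`). -/
def IsPermList {n : ℕ} (L : List (Fin n)) : Prop := L.Nodup ∧ ∀ x : Fin n, x ∈ L

/-- The objective value `∑_{i=1}^n c(S_i)(u(S_i) - u(S_{i-1}))`. -/
noncomputable def objective {n : ℕ} (u c : Finset (Fin n) → ℝ) (L : List (Fin n)) : ℝ :=
  ∑ i ∈ Finset.range L.length,
    c (prefSet L (i + 1)) * (u (prefSet L (i + 1)) - u (prefSet L i))

/-- The element in (1-indexed) position `k` of the list `L`. -/
def elemAt {n : ℕ} [NeZero n] (L : List (Fin n)) (k : ℕ) : Fin n := L.getD (k - 1) default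

/-- The quantity `b_{ij} = u(o_i | O_{i-1} ∪ L_{j-1}) - u(o_i | O_{i-1} ∪ L_{j-1} ∪ {l_j})`. -/
noncomputable def bmat {n : ℕ} [NeZero n] (u : Finset (Fin n) → ℝ) (L O : List (Fin n))
    (i j : ℕ) : ℝ :=
  marg u (elemAt O i) (prefSet O (i - 1) ∪ prefSet L (j - 1)) -
    marg u (elemAt O i) (insert (elemAt L j) (prefSet O (i - 1) ∪ prefSet L (j - 1)))

/-- Monotone set function. -/
def Mono {n : ℕ} (f : Finset (Fin n) → ℝ) : Prop :=
  ∀ S : Finset (Fin n), ∀ i : Fin n, f S ≤ f (insert i S)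

/-- Submodular set function. -/
def Submod {n : ℕ} (f : Finset (Fin n) → ℝ) : Prop :=
  ∀ S : Finset (Fin n), ∀ i j : Fin n, i ∉ S → j ∉ S →
    marg f i (insert j S) ≤ marg f i S

/-- Second-order supermodular set function. -/
def SOSupermod {n : ℕ} (f : Finset (Fin n) → ℝ) : Prop :=
  ∀ S : Finset (Fin n), ∀ i j k : Fin n, i ∉ S → j ∉ S → k ∉ S →
    marg f i (insert k S) - marg f i (insert j (insert k S)) ≤
      marg f i S - marg f i (insert j S)

/-- Objective value of a length-(n+1) pseudo-neighbor sequence, where costs are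
counted with multiplicity via the singleton costs `cs`. -/
noncomputable def pseudoObj {n : ℕ} (u : Finset (Fin n) → ℝ) (cs : Fin n → ℝ)
    (P : List (Fin n)) : ℝ :=
  ∑ k ∈ Finset.range P.length,
    (((P.take (k + 1)).map cs).sum) * (u (prefSet P (k + 1)) - u (prefSet P k))

/-- The pseudo-neighbor of `L` obtained by inserting a second copy of the element in
(1-indexed) position `i` at (1-indexed) position `j`. -/
def pseudoNeighbor {n : ℕ} [NeZero n] (L : List (Fin n)) (i j : ℕ) : List (Fin n) :=
  L.insertIdx (j - 1) (elemAt L i)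

/-- `L` is locally optimal with respect to insertions: no pseudo-neighbor has strictly
smaller objective value. -/
def LocallyOptimalInsertions {n : ℕ} [NeZero n] (u c : Finset (Fin n) → ℝ) (cs : Fin n → ℝ)
    (L : List (Fin n)) : Prop :=
  ∀ i j : ℕ, 1 ≤ j → j < i → i ≤ n →
    objective u c L ≤ pseudoObj u cs (pseudoNeighbor L i j)

/-- The list obtained from `L` by removing the element in (1-indexed) position `i` and
reinserting it at (1-indexed) position `j`. -/
def moveList {n : ℕ} [NeZero n] (L : List (Fin n)) (i j : ℕ) : List (Fin n) :=
  (L.eraseIdx (i - 1)).insertIdx (j - 1) (elemAt L i)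

/-- `L'` is a move-neighbor of `L`. -/
def IsMoveNeighbor {n : ℕ} [NeZero n] (L L' : List (Fin n)) : Prop :=
  ∃ i j : ℕ, 1 ≤ i ∧ i ≤ n ∧ 1 ≤ j ∧ j ≤ n ∧ i ≠ j ∧ L' = moveList L i j

section Aux

lemma mono_subset {n : ℕ} {f : Finset (Fin n) → ℝ} (hf : Mono f) (S T : Finset (Fin n))
    (h : S ⊆ T) : f S ≤ f T := by
  classical
  obtain ⟨k, hk⟩ : ∃ k, (T \ S).card = k := ⟨_, rfl⟩
  induction k generalizing S with
  | zero =>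
      have he : T \ S = ∅ := Finset.card_eq_zero.mp hk
      have hTS : T ⊆ S := by
        intro x hx
        by_contra hxs
        exact absurd (he ▸ Finset.mem_sdiff.mpr ⟨hx, hxs⟩) (Finset.notMem_empty x)
      rw [Finset.Subset.antisymm h hTS]
  | succ k ih =>
      have hne : (T \ S).Nonempty := by rw [← Finset.card_pos, hk]; omega
      obtain ⟨x, hx⟩ := hne
      rw [Finset.mem_sdiff] at hx
      have h1 : insert x S ⊆ T := Finset.insert_subset hx.1 h
      have h2 : (T \ insert x S).card = k := by
        rw [Finset.sdiff_insert, Finset.card_erase_of_mem (Finset.mem_sdiff.mpr hx), hk]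
        omega
      exact le_trans (hf S x) (ih _ h1 h2)

lemma perm_length {n : ℕ} {L : List (Fin n)} (hL : IsPermList L) : L.length = n := by
  have h1 : L.toFinset = Finset.univ := by ext x; simp [hL.2 x]
  have h2 := List.toFinset_card_of_nodup hL.1
  rw [h1] at h2
  simp at h2
  omega

lemma prefSet_zero' {n : ℕ} (L : List (Fin n)) : prefSet L 0 = ∅ := by simp [prefSet]

lemma prefSet_subset {n : ℕ} (L : List (Fin n)) {i j : ℕ} (h : i ≤ j) :
    prefSet L i ⊆ prefSet L j := by
  intro x hx
  simp only [prefSet, List.mem_toFinset] at *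
  have hT : L.take i = (L.take j).take i := by rw [List.take_take, Nat.min_eq_left h]
  rw [hT] at hx
  exact List.take_subset _ _ hx

lemma prefSet_full {n : ℕ} {L : List (Fin n)} (hL : IsPermList L) :
    prefSet L n = Finset.univ := by
  have hl := perm_length hL
  ext x
  simp [prefSet, ← hl, List.take_length, hL.2 x]

lemma prefSet_succ' {n : ℕ} [NeZero n] {L : List (Fin n)} {i : ℕ} (h : i < L.length) :
    prefSet L (i + 1) = insert (L.getD i default) (prefSet L i) := by
  rw [prefSet, prefSet, List.getD_eq_getElem _ _ h, List.take_succ,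
    List.getElem?_eq_getElem h, Option.toList_some, List.toFinset_append,
    List.toFinset_cons, List.toFinset_nil, LawfulSingleton.insert_empty_eq, Finset.union_comm,
    ← Finset.insert_eq]

lemma getD_mem_prefSet {n : ℕ} [NeZero n] {L : List (Fin n)} {i k : ℕ} (hik : i < k)
    (hi : i < L.length) : L.getD i default ∈ prefSet L k := by
  rw [List.getD_eq_getElem _ _ hi]
  simp only [prefSet, List.mem_toFinset]
  have hkl : i < (L.take k).length := by simp [hi, hik]
  have hg : (L.take k)[i] = L[i] := List.getElem_take
  exact hg ▸ List.getElem_mem hkl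

lemma tele_sum (g : ℕ → ℝ) {k m : ℕ} (h : k ≤ m) :
    ∑ i ∈ Finset.Ico k m, (g (i + 1) - g i) = g m - g k := by
  rw [Finset.sum_Ico_eq_sub _ h, Finset.sum_range_sub, Finset.sum_range_sub]
  ring

lemma delta_nonneg {n : ℕ} {u : Finset (Fin n) → ℝ} (hu : Mono u) (P : List (Fin n))
    {i j : ℕ} (h : i ≤ j) : 0 ≤ u (prefSet P j) - u (prefSet P i) :=
  sub_nonneg.mpr (mono_subset hu _ _ (prefSet_subset P h))

lemma sorted_getD {n : ℕ} [NeZero n] {L : List (Fin n)} {c : Finset (Fin n) → ℝ}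
    (hs : L.Pairwise fun a b => c {a} ≤ c {b}) {i j : ℕ} (hij : i ≤ j) (hj : j < L.length) :
    c {L.getD i default} ≤ c {L.getD j default} := by
  rcases eq_or_lt_of_le hij with rfl | h
  · exact le_refl _
  · rw [List.getD_eq_getElem _ _ (lt_trans h hj), List.getD_eq_getElem _ _ hj]
    exact List.pairwise_iff_getElem.mp hs i j (lt_trans h hj) hj h

lemma key_lower {n : ℕ} [NeZero n] (u c : Finset (Fin n) → ℝ)
    (hu_mono : Mono u) (hc_nonneg : ∀ S, 0 ≤ c S) (hc_mono : Mono c)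
    (L O : List (Fin n)) (hL : IsPermList L) (hO : IsPermList O)
    (hsorted : L.Pairwise (fun a b => c {a} ≤ c {b})) (j : ℕ) (hj : j < n) :
    c {L.getD j default} * (u Finset.univ - u (prefSet L j)) ≤ objective u c O := by
  classical
  have hOlen : O.length = n := perm_length hO
  have hLlen : L.length = n := perm_length hL
  have hex : ∃ i, i < n ∧ O.getD i default ∉ prefSet L j := by
    by_contra hcon
    push_neg at hcon
    have hsub : (Finset.univ : Finset (Fin n)) ⊆ prefSet L j := by
      intro x _
      obtain ⟨i, hi, hx⟩ := List.mem_iff_getElem.mp (hO.2 x)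
      have hi' : i < n := by omega
      have := hcon i hi'
      rwa [List.getD_eq_getElem _ _ hi, hx] at this
    have h1 : n ≤ (prefSet L j).card := by
      have := Finset.card_le_card hsub
      simpa using this
    have h2 : (prefSet L j).card ≤ j :=
      le_trans (List.toFinset_card_le _) (by simp [List.length_take])
    omega
  set k := Nat.find hex with hkdef
  obtain ⟨hkn, hknot⟩ := Nat.find_spec hex
  have hmin : ∀ i, i < k → i < n → O.getD i default ∈ prefSet L j := by
    intro i hik hin
    have := Nat.find_min hex hik
    push_neg at this
    exact this hin
  have hpre : prefSet O k ⊆ prefSet L j := by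
    intro x hx
    simp only [prefSet, List.mem_toFinset] at hx
    obtain ⟨i, hi, hxi⟩ := List.mem_iff_getElem.mp hx
    have hil : i < O.length := by
      have := (List.length_take : (O.take k).length = min k O.length) ▸ hi
      omega
    have hik : i < k := by
      have := (List.length_take : (O.take k).length = min k O.length) ▸ hi
      omega
    have hg : (O.take k)[i] = O[i] := List.getElem_take
    have hmem := hmin i hik (by omega)
    rw [List.getD_eq_getElem _ _ hil] at hmem
    rw [← hxi, hg]
    exact hmem
  have hck : c {L.getD j default} ≤ c {O.getD k default} := by
    obtain ⟨m, hm, hxm⟩ := List.mem_iff_getElem.mp (hL.2 (O.getD k default))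
    have hmj : j ≤ m := by
      by_contra hlt
      push_neg at hlt
      apply hknot
      have := getD_mem_prefSet hlt hm
      rwa [List.getD_eq_getElem _ _ hm, hxm] at this
    have hsg := sorted_getD hsorted hmj hm
    rwa [List.getD_eq_getElem _ _ hm, hxm] at hsg
  have hdnn : ∀ i : ℕ, 0 ≤ u (prefSet O (i + 1)) - u (prefSet O i) :=
    fun i => delta_nonneg hu_mono O (Nat.le_succ i)
  have hknl : k < O.length := by omega
  calc c {L.getD j default} * (u Finset.univ - u (prefSet L j))
      ≤ c {O.getD k default} * (u Finset.univ - u (prefSet O k)) := by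
        apply mul_le_mul hck
        · have : u (prefSet O k) ≤ u (prefSet L j) := mono_subset hu_mono _ _ hpre
          linarith
        · have h1 : prefSet L j ⊆ Finset.univ := Finset.subset_univ _
          have := mono_subset hu_mono _ _ h1
          linarith
        · exact hc_nonneg _
    _ = ∑ i ∈ Finset.Ico k n, c {O.getD k default} *
          (u (prefSet O (i + 1)) - u (prefSet O i)) := by
        rw [← Finset.mul_sum, tele_sum (fun i => u (prefSet O i)) (le_of_lt hkn),
          prefSet_full hO]
    _ ≤ ∑ i ∈ Finset.Ico k n, c (prefSet O (i + 1)) *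
          (u (prefSet O (i + 1)) - u (prefSet O i)) := by
        apply Finset.sum_le_sum
        intro i hi
        rw [Finset.mem_Ico] at hi
        apply mul_le_mul_of_nonneg_right _ (hdnn i)
        apply mono_subset hc_mono
        rw [Finset.singleton_subset_iff]
        exact getD_mem_prefSet (by omega : k < i + 1) hknl
    _ ≤ objective u c O := by
        rw [objective, hOlen]
        apply Finset.sum_le_sum_of_subset_of_nonneg
        · intro i hi
          rw [Finset.mem_Ico] at hi
          exact Finset.mem_range.mpr hi.2
        · intro i _ _
          exact mul_nonneg (hc_nonneg _) (hdnn i)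

end Aux

theorem nondecreasing_cost_n_approx_subadditive (n : ℕ) [NeZero n]
    (u c : Finset (Fin n) → ℝ)
    (hu0 : u ∅ = 0) (hu_nonneg : ∀ S, 0 ≤ u S) (hu_mono : Mono u)
    (hc0 : c ∅ = 0) (hc_nonneg : ∀ S, 0 ≤ c S) (hc_mono : Mono c)
    (hc_subadd : ∀ S T : Finset (Fin n), c (S ∪ T) ≤ c S + c T)
    (L : List (Fin n)) (hL : IsPermList L)
    (hsorted : L.Pairwise (fun a b => c {a} ≤ c {b})) :
    ∀ O, IsPermList O → objective u c L ≤ n * objective u c O := by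
  classical
  intro O hO
  have hLlen : L.length = n := perm_length hL
  have hcpre : ∀ i : ℕ, i < n → c (prefSet L (i + 1)) ≤
      ∑ j ∈ Finset.range (i + 1), c {L.getD j default} := by
    intro i
    induction i with
    | zero =>
        intro hi
        rw [prefSet_succ' (by omega), prefSet_zero', Finset.sum_range_one]
        simp
    | succ i ih =>
        intro hi
        rw [prefSet_succ' (by omega), Finset.sum_range_succ, Finset.insert_eq]
        have h1 := hc_subadd {L.getD (i + 1) default} (prefSet L (i + 1))
        have h2 := ih (by omega)
        linarith
  have step1 : objective u c L ≤ ∑ i ∈ Finset.range n,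
      (∑ j ∈ Finset.range (i + 1), c {L.getD j default}) *
        (u (prefSet L (i + 1)) - u (prefSet L i)) := by
    rw [objective, hLlen]
    apply Finset.sum_le_sum
    intro i hi
    exact mul_le_mul_of_nonneg_right (hcpre i (Finset.mem_range.mp hi))
      (delta_nonneg hu_mono L (Nat.le_succ i))
  have step2 : ∑ i ∈ Finset.range n,
      (∑ j ∈ Finset.range (i + 1), c {L.getD j default}) *
        (u (prefSet L (i + 1)) - u (prefSet L i)) =
      ∑ j ∈ Finset.range n, c {L.getD j default} * (u Finset.univ - u (prefSet L j)) := by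
    have hexp : ∀ i ∈ Finset.range n,
        (∑ j ∈ Finset.range (i + 1), c {L.getD j default}) *
          (u (prefSet L (i + 1)) - u (prefSet L i)) =
        ∑ j ∈ Finset.range n, if j ≤ i then
          c {L.getD j default} * (u (prefSet L (i + 1)) - u (prefSet L i)) else 0 := by
      intro i hi
      rw [Finset.sum_mul, ← Finset.sum_filter]
      apply Finset.sum_congr _ (fun _ _ => rfl)
      ext j
      simp only [Finset.mem_range, Finset.mem_filter, Nat.lt_succ_iff]
      rw [Finset.mem_range] at hi
      omega
    rw [Finset.sum_congr rfl hexp, Finset.sum_comm]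
    apply Finset.sum_congr rfl
    intro j hj
    rw [Finset.mem_range] at hj
    rw [← Finset.sum_filter]
    have hfil : (Finset.range n).filter (fun i => j ≤ i) = Finset.Ico j n := by
      ext i
      simp only [Finset.mem_filter, Finset.mem_range, Finset.mem_Ico]
      omega
    rw [hfil, ← Finset.mul_sum, tele_sum (fun i => u (prefSet L i)) (le_of_lt hj),
      prefSet_full hL]
  calc objective u c L
      ≤ ∑ j ∈ Finset.range n, c {L.getD j default} * (u Finset.univ - u (prefSet L j)) :=
        le_of_le_of_eq step1 step2
    _ ≤ ∑ _j ∈ Finset.range n, objective u c O := by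
        apply Finset.sum_le_sum
        intro j hj
        exact key_lower u c hu_mono hc_nonneg hc_mono L O hL hO hsorted j
          (Finset.mem_range.mp hj)
    _ = n * objective u c O := by
        rw [Finset.sum_const, Finset.card_range, nsmul_eq_mul]
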